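/- Soundness of the EqualSync rule: for regular expressions p and q over an alphabet Σ and any string s, if L(δ_s p) = L(δ_s q), then Sync(s, p, q) holds. -/
import Mathlib

open RegularExpression

variable {α : Type*}

/-- The derivative of a regular expression with respect to a string,
folding the Brzozowski character derivative over the string. -/
def derivs [DecidableEq α] (p : RegularExpression α) (w : List α) : RegularExpression α :=
  w.foldl RegularExpression.deriv p

/-- `w` is a counterexample for `p` and `q` if exactly one of them accepts `w`. -/
def Counterexample (p q : RegularExpression α) (w : List α) : Prop :=
  Xor' (w ∈ p.matches') (w ∈ q.matches')

/-- A string `w` is reducible (for `p` and `q`) if `w = s ++ t ++ u` with `t` nonempty,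
`L(δ_s p) = L(δ_{s++t} p)` and `L(δ_s q) = L(δ_{s++t} q)`. -/
def Reducible [DecidableEq α] (p q : RegularExpression α) (w : List α) : Prop :=
  ∃ s t u : List α, w = s ++ t ++ u ∧ t ≠ [] ∧
    (derivs p s).matches' = (derivs p (s ++ t)).matches' ∧
    (derivs q s).matches' = (derivs q (s ++ t)).matches'

/-- `Sync s p q` : `p` and `q` have no irreducible counterexample having `s` as a prefix. -/
def Sync [DecidableEq α] (s : List α) (p q : RegularExpression α) : Prop :=
  ∀ w : List α, s <+: w → Counterexample p q w → Reducible p q w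

lemma rmatch_derivs [DecidableEq α] (s : List α) (p : RegularExpression α) (u : List α) :
    (derivs p s).rmatch u = p.rmatch (s ++ u) := by
  induction s generalizing p with
  | nil => rfl
  | cons a s ih =>
    simp only [derivs, List.foldl_cons, List.cons_append]
    rw [RegularExpression.rmatch]
    exact ih _

lemma mem_derivs [DecidableEq α] (s : List α) (p : RegularExpression α) (u : List α) :
    u ∈ (derivs p s).matches' ↔ (s ++ u) ∈ p.matches' := by
  rw [← rmatch_iff_matches', ← rmatch_iff_matches', rmatch_derivs]

theorem equalSync_sound [DecidableEq α] (p q : RegularExpression α) (s : List α)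
    (h : (derivs p s).matches' = (derivs q s).matches') : Sync s p q := by
  rintro w ⟨u, rfl⟩ hc
  exfalso
  have : (s ++ u) ∈ p.matches' ↔ (s ++ u) ∈ q.matches' := by
    rw [← mem_derivs, ← mem_derivs, h]
  rcases hc with ⟨h1, h2⟩ | ⟨h1, h2⟩ <;> tauto
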